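/- Let A, B be n×n positive semidefinite complex matrices and let t ∈ (0,1). Then ‖A^t B^(1-t) + B^t A^(1-t)‖_F ≤ 2^(max{2|t − 1/2| − 1/2, 0}) · ‖A + B‖_F, where ‖·‖_F is the Frobenius norm. -/

import Mathlib

set_option maxHeartbeats 4000000

open scoped ComplexOrder

/-- The real power `A ^ r` of a (positive semidefinite) matrix, defined via the
continuous functional calculus (equivalently, via the spectral decomposition). -/
noncomputable def matRpow {n : ℕ} (A : Matrix (Fin n) (Fin n) ℂ) (r : ℝ) :
    Matrix (Fin n) (Fin n) ℂ :=
  cfc (fun x : ℝ => x ^ r) A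

/-- The Frobenius (Hilbert–Schmidt) norm `‖M‖_F = (∑_{i,j} |M_{ij}|²)^{1/2}`. -/
noncomputable def frobeniusNorm' {n : ℕ} (M : Matrix (Fin n) (Fin n) ℂ) : ℝ :=
  Real.sqrt (∑ i, ∑ j, ‖M i j‖ ^ 2)

section Auxiliary


/-- Monotonicity of `r ↦ ρ^r + ρ^{-r}` for `ρ > 0`. -/
lemma cosh_mono {ρ : ℝ} (hρ : 0 < ρ) {r r' : ℝ} (h0 : 0 ≤ r) (h : r ≤ r') :
    ρ ^ r + ρ ^ (-r) ≤ ρ ^ r' + ρ ^ (-r') := by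
  have i1 : ρ ^ r' * ρ ^ (-(r + r')) = ρ ^ (-r) := by
    rw [← Real.rpow_add hρ]; ring_nf
  have i2 : ρ ^ r * ρ ^ (-(r + r')) = ρ ^ (-r') := by
    rw [← Real.rpow_add hρ]; ring_nf
  rcases le_total 1 ρ with h1 | h1
  · have e1 : ρ ^ r ≤ ρ ^ r' := Real.rpow_le_rpow_of_exponent_le h1 h
    have e2 : ρ ^ (-(r + r')) ≤ 1 :=
      Real.rpow_le_one_of_one_le_of_nonpos h1 (by linarith)
    have key : 0 ≤ (ρ ^ r' - ρ ^ r) * (1 - ρ ^ (-(r + r'))) :=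
      mul_nonneg (by linarith) (by linarith)
    have key' : 0 ≤ ρ ^ r' - ρ ^ r' * ρ ^ (-(r + r')) - ρ ^ r + ρ ^ r * ρ ^ (-(r + r')) :=
      le_of_le_of_eq key (by ring)
    rw [i1, i2] at key'
    linarith
  · have e1 : ρ ^ r' ≤ ρ ^ r := Real.rpow_le_rpow_of_exponent_ge hρ h1 h
    have e2 : 1 ≤ ρ ^ (-(r + r')) :=
      Real.one_le_rpow_of_pos_of_le_one_of_nonpos hρ h1 (by linarith)
    have key : 0 ≤ (ρ ^ r - ρ ^ r') * (ρ ^ (-(r + r')) - 1) :=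
      mul_nonneg (by linarith) (by linarith)
    have key' : 0 ≤ ρ ^ r * ρ ^ (-(r + r')) - ρ ^ r - ρ ^ r' * ρ ^ (-(r + r')) + ρ ^ r' :=
      le_of_le_of_eq key (by ring)
    rw [i1, i2] at key'
    linarith

/-- Two-point concavity of `x ↦ x^p` for `0 < p ≤ 1`. -/
lemma two_point_concave {p x y : ℝ} (hp0 : 0 < p) (hp1 : p ≤ 1) (hx : 0 ≤ x) (hy : 0 ≤ y) :
    x ^ p + y ^ p ≤ 2 * ((x + y) / 2) ^ p := by
  rcases eq_or_lt_of_le (add_nonneg hx hy) with h0 | hpos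
  · have hx0 : x = 0 := by linarith [hx, hy, h0.symm ▸ (by linarith : x + y = 0)]
    have hy0 : y = 0 := by linarith [h0.symm ▸ (by linarith : x + y = 0)]
    simp [hx0, hy0, Real.zero_rpow (ne_of_gt hp0)]
  · set m := (x + y) / 2 with hm
    have hmpos : 0 < m := by positivity
    have h1 : x ^ p * m ^ (1 - p) ≤ p * x + (1 - p) * m :=
      Real.geom_mean_le_arith_mean2_weighted (le_of_lt hp0) (by linarith) hx hmpos.le
        (by ring)
    have h2 : y ^ p * m ^ (1 - p) ≤ p * y + (1 - p) * m :=
      Real.geom_mean_le_arith_mean2_weighted (le_of_lt hp0) (by linarith) hy hmpos.le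
        (by ring)
    have hsum : (x ^ p + y ^ p) * m ^ (1 - p) ≤ 2 * m := by
      have : p * x + (1 - p) * m + (p * y + (1 - p) * m) = 2 * m := by
        rw [hm]; ring
      nlinarith [h1, h2]
    have hmsplit : 2 * m = 2 * m ^ p * m ^ (1 - p) := by
      rw [mul_assoc, ← Real.rpow_add hmpos]
      norm_num
    have hmpow : 0 < m ^ (1 - p) := Real.rpow_pos_of_pos hmpos _
    rw [hmsplit] at hsum
    calc x ^ p + y ^ p ≤ 2 * m ^ p := le_of_mul_le_mul_right (by linarith) hmpow
    _ = 2 * ((x + y) / 2) ^ p := by rw [hm]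

/-- Entropy chord bound: `p^p (1-p)^{1-p} ≤ 2^{2p-2}` for `p ∈ [1/2, 1)`. -/
lemma entropy_bound {p : ℝ} (h1 : 1 / 2 ≤ p) (h2 : p < 1) :
    p ^ p * (1 - p) ^ (1 - p) ≤ (2 : ℝ) ^ (2 * p - 2) := by
  have hp : 0 < p := by linarith
  have h1p : 0 < 1 - p := by linarith
  have conc := Real.strictConcave_binEntropy.concaveOn
  have hmem1 : (2⁻¹ : ℝ) ∈ Set.Icc (0 : ℝ) 1 := by norm_num
  have hmem2 : (1 : ℝ) ∈ Set.Icc (0 : ℝ) 1 := by norm_num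
  have ha : (0 : ℝ) ≤ 2 * (1 - p) := by linarith
  have hb : (0 : ℝ) ≤ 2 * p - 1 := by linarith
  have hab : 2 * (1 - p) + (2 * p - 1) = 1 := by ring
  have chord := conc.2 hmem1 hmem2 ha hb hab
  simp only [smul_eq_mul, Real.binEntropy_two_inv, Real.binEntropy_one, mul_zero, add_zero,
    mul_one] at chord
  have hx : 2 * (1 - p) * 2⁻¹ + (2 * p - 1) = p := by ring
  rw [hx] at chord
  -- chord : 2 * (1 - p) * Real.log 2 ≤ Real.binEntropy p
  rw [Real.binEntropy] at chord
  rw [Real.log_inv, Real.log_inv] at chord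
  rw [Real.rpow_def_of_pos hp, Real.rpow_def_of_pos h1p,
    Real.rpow_def_of_pos (by norm_num : (0:ℝ) < 2), ← Real.exp_add, Real.exp_le_exp]
  nlinarith [chord]


lemma ebridge {l m : ℝ} (hl : 0 < l) (hm : 0 < m) (r : ℝ) :
    l ^ (1 + r) * m ^ (1 - r) + l ^ (1 - r) * m ^ (1 + r)
      = l * m * ((l / m) ^ r + (m / l) ^ r) := by
  have hlr : (0:ℝ) < l ^ r := Real.rpow_pos_of_pos hl r
  have hmr : (0:ℝ) < m ^ r := Real.rpow_pos_of_pos hm r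
  rw [Real.div_rpow hl.le hm.le, Real.div_rpow hm.le hl.le,
    Real.rpow_add hl, Real.rpow_sub hl, Real.rpow_add hm, Real.rpow_sub hm,
    Real.rpow_one, Real.rpow_one]
  field_simp

lemma core_ineq {p l m : ℝ} (hp0 : 0 ≤ p) (hp1 : p < 1) (hl : 0 < l) (hm : 0 < m) :
    2 * (l ^ (1 + p) * m ^ (1 - p) + l ^ (1 - p) * m ^ (1 + p))
      ≤ (2 : ℝ) ^ max (2 * p - 1) 0 * (l + m) ^ 2 := by
  have hlp : (0:ℝ) < l ^ p := Real.rpow_pos_of_pos hl p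
  have hmp : (0:ℝ) < m ^ p := Real.rpow_pos_of_pos hm p
  rcases le_or_gt p (1 / 2) with hc | hc
  · -- small p : constant 1
    rw [max_eq_right (by linarith), Real.rpow_zero, one_mul]
    have hρ : (0:ℝ) < l / m := by positivity
    have mono := cosh_mono hρ hp0 hc
    have hinv : ∀ s : ℝ, (l / m) ^ (-s) = (m / l) ^ s := by
      intro s
      rw [Real.rpow_neg hρ.le, ← Real.inv_rpow hρ.le, inv_div]
    rw [hinv p, hinv (1/2)] at mono
    have e1 := ebridge hl hm p
    have e2 := ebridge hl hm (1/2)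
    have step1 : l ^ (1 + p) * m ^ (1 - p) + l ^ (1 - p) * m ^ (1 + p)
        ≤ l ^ (1 + (1/2:ℝ)) * m ^ (1 - (1/2:ℝ)) + l ^ (1 - (1/2:ℝ)) * m ^ (1 + (1/2:ℝ)) := by
      rw [e1, e2]
      have hlm : (0:ℝ) < l * m := by positivity
      exact mul_le_mul_of_nonneg_left mono hlm.le
    set u := l ^ (1/2 : ℝ) with hu
    set v := m ^ (1/2 : ℝ) with hv
    have hu0 : 0 < u := Real.rpow_pos_of_pos hl _
    have hv0 : 0 < v := Real.rpow_pos_of_pos hm _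
    have hul : u ^ 2 = l := by
      rw [hu, ← Real.rpow_natCast (l ^ (1/2:ℝ)) 2, ← Real.rpow_mul hl.le]; norm_num
    have hvm : v ^ 2 = m := by
      rw [hv, ← Real.rpow_natCast (m ^ (1/2:ℝ)) 2, ← Real.rpow_mul hm.le]; norm_num
    have h32l : l ^ (1 + (1/2:ℝ)) = u ^ 3 := by
      rw [hu, ← Real.rpow_natCast (l ^ (1/2:ℝ)) 3, ← Real.rpow_mul hl.le]; norm_num
    have h32m : m ^ (1 + (1/2:ℝ)) = v ^ 3 := by
      rw [hv, ← Real.rpow_natCast (m ^ (1/2:ℝ)) 3, ← Real.rpow_mul hm.le]; norm_num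
    have h12l : l ^ (1 - (1/2:ℝ)) = u := by rw [hu]; norm_num
    have h12m : m ^ (1 - (1/2:ℝ)) = v := by rw [hv]; norm_num
    have step2 : 2 * (l ^ (1 + (1/2:ℝ)) * m ^ (1 - (1/2:ℝ))
        + l ^ (1 - (1/2:ℝ)) * m ^ (1 + (1/2:ℝ))) ≤ (l + m) ^ 2 := by
      rw [h32l, h32m, h12l, h12m, ← hul, ← hvm]
      nlinarith [sq_nonneg (u - v), sq_nonneg u, sq_nonneg v, mul_pos hu0 hv0]
    linarith
  · -- large p
    rw [max_eq_left (by linarith)]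
    have hlm : (0:ℝ) < l * m := by positivity
    have hsq : ∀ x : ℝ, 0 < x → ((x ^ 2 : ℝ)) ^ p = x ^ p * x ^ p := by
      intro x hx
      rw [pow_two, Real.mul_rpow hx.le hx.le]
    have hE : l ^ (1 + p) * m ^ (1 - p) + l ^ (1 - p) * m ^ (1 + p)
        = (l * m) ^ (1 - p) * ((l ^ 2) ^ p + (m ^ 2) ^ p) := by
      rw [Real.mul_rpow hl.le hm.le, hsq l hl, hsq m hm,
        Real.rpow_add hl, Real.rpow_sub hl, Real.rpow_add hm, Real.rpow_sub hm,
        Real.rpow_one, Real.rpow_one]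
      field_simp
    have conc := two_point_concave (by linarith : (0:ℝ) < p) hp1.le
      (sq_nonneg l) (sq_nonneg m)
    have hX : (0:ℝ) < 2 * (l * m) := by positivity
    have hY : (0:ℝ) < l ^ 2 + m ^ 2 := by positivity
    have hiden : (l * m) ^ (1 - p : ℝ) * (2 * ((l ^ 2 + m ^ 2) / 2) ^ p)
        = (2 * (l * m)) ^ (1 - p : ℝ) * (l ^ 2 + m ^ 2) ^ p := by
      rw [Real.mul_rpow (by norm_num) hlm.le, Real.div_rpow hY.le (by norm_num)]
      have h2 : (2:ℝ) ^ (1 - p : ℝ) = 2 / 2 ^ (p : ℝ) := by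
        rw [Real.rpow_sub (by norm_num), Real.rpow_one]
      rw [h2]
      have h2p : (0:ℝ) < (2:ℝ) ^ (p:ℝ) := Real.rpow_pos_of_pos (by norm_num) _
      field_simp
    have hw1 : (0:ℝ) < 1 - p := by linarith
    have hw2 : (0:ℝ) < p := by linarith
    have young := Real.geom_mean_le_arith_mean2_weighted hw1.le hw2.le
      (le_of_lt (show (0:ℝ) < 2 * (l * m) / (1 - p) by positivity))
      (le_of_lt (show (0:ℝ) < (l ^ 2 + m ^ 2) / p by positivity))
      (by ring)
    have hYsplit : (1 - p) * (2 * (l * m) / (1 - p)) + p * ((l ^ 2 + m ^ 2) / p)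
        = (l + m) ^ 2 := by field_simp; ring
    rw [hYsplit, Real.div_rpow hX.le hw1.le, Real.div_rpow hY.le hw2.le] at young
    have hK : (0:ℝ) < p ^ (p:ℝ) * (1 - p) ^ (1 - p : ℝ) := by
      have h1 := Real.rpow_pos_of_pos hw2 (p:ℝ)
      have h2 := Real.rpow_pos_of_pos hw1 (1 - p : ℝ)
      positivity
    have young' : (2 * (l * m)) ^ (1 - p : ℝ) * (l ^ 2 + m ^ 2) ^ p
        ≤ p ^ (p:ℝ) * (1 - p) ^ (1 - p : ℝ) * (l + m) ^ 2 := by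
      have h1 : (2 * (l * m)) ^ (1 - p : ℝ) / (1 - p) ^ (1 - p : ℝ)
          * ((l ^ 2 + m ^ 2) ^ (p : ℝ) / p ^ (p : ℝ))
          = (2 * (l * m)) ^ (1 - p : ℝ) * (l ^ 2 + m ^ 2) ^ p
            / (p ^ (p:ℝ) * (1 - p) ^ (1 - p : ℝ)) := by
        rw [div_mul_div_comm, mul_comm ((1 - p) ^ (1 - p : ℝ)) (p ^ (p:ℝ))]
      rw [h1] at young
      calc (2 * (l * m)) ^ (1 - p : ℝ) * (l ^ 2 + m ^ 2) ^ p
          = ((2 * (l * m)) ^ (1 - p : ℝ) * (l ^ 2 + m ^ 2) ^ p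
            / (p ^ (p:ℝ) * (1 - p) ^ (1 - p : ℝ))) * (p ^ (p:ℝ) * (1 - p) ^ (1 - p : ℝ)) :=
            (div_mul_cancel₀ _ (ne_of_gt hK)).symm
        _ ≤ (l + m) ^ 2 * (p ^ (p:ℝ) * (1 - p) ^ (1 - p : ℝ)) :=
            mul_le_mul_of_nonneg_right young hK.le
        _ = p ^ (p:ℝ) * (1 - p) ^ (1 - p : ℝ) * (l + m) ^ 2 := by ring
    have hent := entropy_bound (le_of_lt (by linarith : (1:ℝ)/2 < p)) hp1
    have hfinal : (2 : ℝ) ^ (2 * p - 1) = 2 * (2:ℝ) ^ (2 * p - 2) := by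
      rw [show (2 * p - 1 : ℝ) = 1 + (2 * p - 2) by ring, Real.rpow_add (by norm_num),
        Real.rpow_one]
    rw [hE, hfinal]
    have hlmp : (0:ℝ) ≤ (l * m) ^ (1 - p : ℝ) := (Real.rpow_pos_of_pos hlm _).le
    calc 2 * ((l * m) ^ (1 - p:ℝ) * ((l ^ 2) ^ p + (m ^ 2) ^ p))
        ≤ 2 * ((l * m) ^ (1 - p:ℝ) * (2 * ((l ^ 2 + m ^ 2) / 2) ^ p)) := by
          have := mul_le_mul_of_nonneg_left conc hlmp
          linarith
      _ = 2 * ((2 * (l * m)) ^ (1 - p : ℝ) * (l ^ 2 + m ^ 2) ^ p) := by rw [hiden]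
      _ ≤ 2 * (p ^ (p:ℝ) * (1 - p) ^ (1 - p : ℝ) * (l + m) ^ 2) := by linarith [young']
      _ ≤ 2 * ((2:ℝ) ^ (2 * p - 2) * (l + m) ^ 2) := by
          have h2 : (0:ℝ) ≤ (l + m) ^ 2 := sq_nonneg _
          have := mul_le_mul_of_nonneg_right hent h2
          nlinarith [this]
      _ = 2 * (2:ℝ) ^ (2 * p - 2) * (l + m) ^ 2 := by ring


lemma scalar_ineq (t l m : ℝ) (ht0 : 0 < t) (ht1 : t < 1) (hl : 0 ≤ l) (hm : 0 ≤ m) :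
    2 * ((l ^ t * m ^ (1 - t)) ^ 2 + (l ^ (1 - t) * m ^ t) ^ 2)
      ≤ ((2:ℝ) ^ max (2 * |t - 1 / 2| - 1 / 2) (0:ℝ)) ^ 2 * (l + m) ^ 2 := by
  set q := |2 * t - 1| with hqdef
  have hq1 : q < 1 := by
    rw [hqdef, abs_lt]; constructor <;> linarith
  have hq0 : 0 ≤ q := abs_nonneg _
  have hcsq : ((2:ℝ) ^ max (2 * |t - 1 / 2| - 1 / 2) (0:ℝ)) ^ 2
      = (2:ℝ) ^ max (2 * q - 1) 0 := by
    have habs : 2 * |t - 1 / 2| = q := by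
      rw [hqdef, show (2 * t - 1 : ℝ) = 2 * (t - 1/2) by ring, abs_mul]
      norm_num
    rw [habs, ← Real.rpow_natCast ((2:ℝ) ^ max (q - 1/2) 0) 2, ← Real.rpow_mul (by norm_num)]
    congr 1
    push_cast
    rw [max_mul_of_nonneg _ _ (by norm_num : (0:ℝ) ≤ 2)]
    congr 1 <;> ring
  rw [hcsq]
  rcases eq_or_lt_of_le hl with hl0 | hlpos
  · rw [← hl0, Real.zero_rpow (ne_of_gt ht0), Real.zero_rpow (by linarith : (1:ℝ) - t ≠ 0)]
    have : (0:ℝ) ≤ (2:ℝ) ^ max (2 * q - 1) 0 * (0 + m) ^ 2 := by positivity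
    simpa using this
  rcases eq_or_lt_of_le hm with hm0 | hmpos
  · rw [← hm0, Real.zero_rpow (ne_of_gt ht0), Real.zero_rpow (by linarith : (1:ℝ) - t ≠ 0)]
    have : (0:ℝ) ≤ (2:ℝ) ^ max (2 * q - 1) 0 * (l + 0) ^ 2 := by positivity
    simpa using this
  have pow2 : ∀ x : ℝ, 0 < x → ∀ a : ℝ, (x ^ a) ^ 2 = x ^ (2 * a) := by
    intro x hx a
    rw [← Real.rpow_natCast (x ^ a) 2, ← Real.rpow_mul hx.le]
    norm_num [mul_comm]
  have expand : (l ^ t * m ^ (1 - t)) ^ 2 + (l ^ (1 - t) * m ^ t) ^ 2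
      = l ^ (2 * t) * m ^ (2 * (1 - t)) + l ^ (2 * (1 - t)) * m ^ (2 * t) := by
    rw [mul_pow, mul_pow, pow2 l hlpos, pow2 m hmpos, pow2 l hlpos, pow2 m hmpos]
  rw [expand]
  rcases le_or_gt (1/2 : ℝ) t with hth | hth
  · have hq : q = 2 * t - 1 := abs_of_nonneg (by linarith)
    have e1 : 2 * t = 1 + q := by rw [hq]; ring
    have e2 : 2 * (1 - t) = 1 - q := by rw [hq]; ring
    rw [e1, e2]
    exact core_ineq hq0 hq1 hlpos hmpos
  · have hq : q = 1 - 2 * t := by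
      rw [hqdef, abs_of_neg (by linarith)]; ring
    have e1 : 2 * t = 1 - q := by rw [hq]; ring
    have e2 : 2 * (1 - t) = 1 + q := by rw [hq]; ring
    rw [e1, e2, add_comm]
    exact core_ineq hq0 hq1 hlpos hmpos





open Matrix


variable {n : ℕ}

/-- sum of squared entry norms as real part of trace. -/
lemma f2_eq_trace (N : Matrix (Fin n) (Fin n) ℂ) :
    (∑ i, ∑ j, ‖N i j‖ ^ 2) = ((Nᴴ * N).trace).re := by
  rw [Matrix.trace]
  rw [Complex.re_sum]
  rw [Finset.sum_comm]
  congr 1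
  funext j
  rw [Matrix.diag_apply, Matrix.mul_apply, Complex.re_sum]
  congr 1
  funext i
  rw [Matrix.conjTranspose_apply]
  have : star (N i j) * N i j = ((Complex.normSq (N i j) : ℝ) : ℂ) := by
    rw [mul_comm]; exact Complex.mul_conj (N i j)
  rw [this, Complex.ofReal_re, Complex.normSq_eq_norm_sq]


/-- Unitary invariance of the squared Frobenius sum. -/
lemma f2_conj (U V N : Matrix (Fin n) (Fin n) ℂ)
    (hU : U * star U = 1) (hV : V * star V = 1) :
    (∑ i, ∑ j, ‖(star U * N * V) i j‖ ^ 2) = ∑ i, ∑ j, ‖N i j‖ ^ 2 := by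
  rw [f2_eq_trace, f2_eq_trace]
  congr 1
  have h1 : (star U * N * V)ᴴ * (star U * N * V) = star V * (Nᴴ * N) * V := by
    rw [← Matrix.star_eq_conjTranspose, ← Matrix.star_eq_conjTranspose]
    rw [StarMul.star_mul, StarMul.star_mul, star_star]
    -- (star V * (star N * U)) * (star U * N * V)
    simp only [Matrix.mul_assoc]
    rw [← Matrix.mul_assoc U (star U), hU, Matrix.one_mul]
  rw [h1, Matrix.trace_mul_comm, ← Matrix.mul_assoc, hV, Matrix.one_mul]

lemma conj3 (U V P Q : Matrix (Fin n) (Fin n) ℂ)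
    (hU : star U * U = 1) (hV : star V * V = 1) :
    star U * ((U * P * star U) * (V * Q * star V)) * V = P * (star U * V) * Q := by
  simp only [Matrix.mul_assoc]
  rw [hV, Matrix.mul_one, ← Matrix.mul_assoc (star U) U, hU, Matrix.one_mul]

lemma conjL (U V P : Matrix (Fin n) (Fin n) ℂ) (hU : star U * U = 1) :
    star U * (U * P * star U) * V = P * (star U * V) := by
  simp only [Matrix.mul_assoc]
  rw [← Matrix.mul_assoc (star U) U, hU, Matrix.one_mul]

lemma conjR (U V Q : Matrix (Fin n) (Fin n) ℂ) (hV : star V * V = 1) :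
    star U * (V * Q * star V) * V = (star U * V) * Q := by
  simp only [Matrix.mul_assoc]
  rw [hV, Matrix.mul_one]


section Frob

attribute [local instance] Matrix.frobeniusSeminormedAddCommGroup

lemma frob_eq_norm (X : Matrix (Fin n) (Fin n) ℂ) : frobeniusNorm' X = ‖X‖ := by
  rw [Matrix.frobenius_norm_def, frobeniusNorm', Real.sqrt_eq_rpow]
  congr 1
  refine Finset.sum_congr rfl fun i _ => Finset.sum_congr rfl fun j _ => ?_
  rw [show ((2:ℝ)) = ((2:ℕ):ℝ) by norm_num, Real.rpow_natCast]

lemma frob_triangle (X Y : Matrix (Fin n) (Fin n) ℂ) :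
    frobeniusNorm' (X + Y) ≤ frobeniusNorm' X + frobeniusNorm' Y := by
  rw [frob_eq_norm, frob_eq_norm, frob_eq_norm]
  exact norm_add_le X Y

end Frob


variable {A B : Matrix (Fin n) (Fin n) ℂ}

/-- representation of `matRpow` via the spectral decomposition. -/
lemma rep (hAh : A.IsHermitian) (r : ℝ) :
    matRpow A r = (hAh.eigenvectorUnitary : Matrix (Fin n) (Fin n) ℂ)
      * Matrix.diagonal (RCLike.ofReal ∘ (fun x : ℝ => x ^ r) ∘ hAh.eigenvalues)
      * star (hAh.eigenvectorUnitary : Matrix (Fin n) (Fin n) ℂ) := by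
  unfold matRpow
  rw [hAh.cfc_eq]
  rfl


end Auxiliary

/-- **Bourin-type bound, Frobenius-norm case.** For `n×n` positive semidefinite
complex matrices `A, B` and `t ∈ (0,1)`,
`‖A^t B^(1-t) + B^t A^(1-t)‖_F ≤ 2^(max (2|t-1/2| - 1/2) 0) * ‖A + B‖_F`. -/
theorem crossed_heinz_bound_frobenius {n : ℕ} (A B : Matrix (Fin n) (Fin n) ℂ)
    (hA : A.PosSemidef) (hB : B.PosSemidef) (t : ℝ) (ht : t ∈ Set.Ioo (0 : ℝ) 1) :
    frobeniusNorm' (matRpow A t * matRpow B (1 - t) + matRpow B t * matRpow A (1 - t)) ≤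
      (2 : ℝ) ^ max (2 * |t - 1 / 2| - 1 / 2) (0 : ℝ) * frobeniusNorm' (A + B) := by
  obtain ⟨ht0, ht1⟩ := ht
  have hAh : A.IsHermitian := hA.1
  have hBh : B.IsHermitian := hB.1
  set U : Matrix (Fin n) (Fin n) ℂ := (hAh.eigenvectorUnitary : Matrix (Fin n) (Fin n) ℂ)
    with hUdef
  set V : Matrix (Fin n) (Fin n) ℂ := (hBh.eigenvectorUnitary : Matrix (Fin n) (Fin n) ℂ)
    with hVdef
  have hU1 : U * star U = 1 := Matrix.mem_unitaryGroup_iff.mp hAh.eigenvectorUnitary.2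
  have hU2 : star U * U = 1 := Matrix.mem_unitaryGroup_iff'.mp hAh.eigenvectorUnitary.2
  have hV1 : V * star V = 1 := Matrix.mem_unitaryGroup_iff.mp hBh.eigenvectorUnitary.2
  have hV2 : star V * V = 1 := Matrix.mem_unitaryGroup_iff'.mp hBh.eigenvectorUnitary.2
  set lam : Fin n → ℝ := hAh.eigenvalues with hlamdef
  set mu : Fin n → ℝ := hBh.eigenvalues with hmudef
  have hlam0 : ∀ i, 0 ≤ lam i := fun i => hA.eigenvalues_nonneg i
  have hmu0 : ∀ i, 0 ≤ mu i := fun i => hB.eigenvalues_nonneg i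
  set c : ℝ := (2 : ℝ) ^ max (2 * |t - 1 / 2| - 1 / 2) (0 : ℝ) with hcdef
  have hc0 : 0 ≤ c := le_of_lt (Real.rpow_pos_of_pos (by norm_num) _)
  -- conjugated forms
  have hS : star U * (matRpow A t * matRpow B (1 - t)) * V
      = Matrix.diagonal (RCLike.ofReal ∘ (fun x : ℝ => x ^ t) ∘ lam)
        * (star U * V) * Matrix.diagonal (RCLike.ofReal ∘ (fun x : ℝ => x ^ (1 - t)) ∘ mu) := by
    rw [rep hAh t, rep hBh (1 - t)]
    exact conj3 U V _ _ hU2 hV2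
  have hT : star V * (matRpow B t * matRpow A (1 - t)) * U
      = Matrix.diagonal (RCLike.ofReal ∘ (fun x : ℝ => x ^ t) ∘ mu)
        * (star V * U) * Matrix.diagonal (RCLike.ofReal ∘ (fun x : ℝ => x ^ (1 - t)) ∘ lam) := by
    rw [rep hBh t, rep hAh (1 - t)]
    exact conj3 V U _ _ hV2 hU2
  have hAB : star U * (A + B) * V
      = Matrix.diagonal (RCLike.ofReal ∘ lam) * (star U * V)
        + (star U * V) * Matrix.diagonal (RCLike.ofReal ∘ mu) := by
    have h1 : star U * A * V = Matrix.diagonal (RCLike.ofReal ∘ lam) * (star U * V) := by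
      nth_rewrite 1 [hAh.spectral_theorem]
      exact conjL U V _ hU2
    have h2 : star U * B * V = (star U * V) * Matrix.diagonal (RCLike.ofReal ∘ mu) := by
      nth_rewrite 1 [hBh.spectral_theorem]
      exact conjR U V _ hV2
    rw [Matrix.mul_add, Matrix.add_mul, h1, h2]
  -- squared-sum identities
  have hF2S : (∑ i, ∑ j, ‖(matRpow A t * matRpow B (1 - t)) i j‖ ^ 2)
      = ∑ i, ∑ j, (lam i ^ t * mu j ^ (1 - t)) ^ 2 * ‖(star U * V) i j‖ ^ 2 := by
    rw [← f2_conj U V _ hU1 hV1, hS]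
    refine Finset.sum_congr rfl fun i _ => Finset.sum_congr rfl fun j _ => ?_
    rw [Matrix.mul_diagonal, Matrix.diagonal_mul]
    simp only [Function.comp_apply]
    rw [norm_mul, norm_mul, RCLike.norm_ofReal, RCLike.norm_ofReal,
      abs_of_nonneg (Real.rpow_nonneg (hlam0 i) t),
      abs_of_nonneg (Real.rpow_nonneg (hmu0 j) (1 - t))]
    ring
  have hF2T : (∑ i, ∑ j, ‖(matRpow B t * matRpow A (1 - t)) i j‖ ^ 2)
      = ∑ i, ∑ j, (lam i ^ (1 - t) * mu j ^ t) ^ 2 * ‖(star U * V) i j‖ ^ 2 := by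
    rw [← f2_conj V U _ hV1 hU1, hT]
    rw [Finset.sum_comm]
    refine Finset.sum_congr rfl fun i _ => Finset.sum_congr rfl fun j _ => ?_
    rw [Matrix.mul_diagonal, Matrix.diagonal_mul]
    simp only [Function.comp_apply]
    have hVU : star V * U = star (star U * V) := by
      rw [StarMul.star_mul, star_star]
    have hentry : ‖(star V * U) j i‖ = ‖(star U * V) i j‖ := by
      rw [hVU, Matrix.star_apply, norm_star]
    rw [norm_mul, norm_mul, RCLike.norm_ofReal, RCLike.norm_ofReal, hentry,
      abs_of_nonneg (Real.rpow_nonneg (hmu0 j) t),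
      abs_of_nonneg (Real.rpow_nonneg (hlam0 i) (1 - t))]
    ring
  have hF2AB : (∑ i, ∑ j, ‖(A + B) i j‖ ^ 2)
      = ∑ i, ∑ j, (lam i + mu j) ^ 2 * ‖(star U * V) i j‖ ^ 2 := by
    rw [← f2_conj U V _ hU1 hV1, hAB]
    refine Finset.sum_congr rfl fun i _ => Finset.sum_congr rfl fun j _ => ?_
    rw [Matrix.add_apply, Matrix.mul_diagonal, Matrix.diagonal_mul]
    simp only [Function.comp_apply]
    have : (RCLike.ofReal (lam i) : ℂ) * (star U * V) i j
        + (star U * V) i j * RCLike.ofReal (mu j)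
        = (RCLike.ofReal (lam i + mu j) : ℂ) * (star U * V) i j := by
      push_cast
      ring
    rw [this, norm_mul, RCLike.norm_ofReal, abs_of_nonneg (add_nonneg (hlam0 i) (hmu0 j))]
    ring
  -- scalar inequality summed
  set a : ℝ := ∑ i, ∑ j, (lam i ^ t * mu j ^ (1 - t)) ^ 2 * ‖(star U * V) i j‖ ^ 2 with hadef
  set b : ℝ := ∑ i, ∑ j, (lam i ^ (1 - t) * mu j ^ t) ^ 2 * ‖(star U * V) i j‖ ^ 2 with hbdef
  set d : ℝ := ∑ i, ∑ j, (lam i + mu j) ^ 2 * ‖(star U * V) i j‖ ^ 2 with hddef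
  have ha0 : 0 ≤ a := Finset.sum_nonneg fun i _ => Finset.sum_nonneg fun j _ => by positivity
  have hb0 : 0 ≤ b := Finset.sum_nonneg fun i _ => Finset.sum_nonneg fun j _ => by positivity
  have hd0 : 0 ≤ d := Finset.sum_nonneg fun i _ => Finset.sum_nonneg fun j _ => by positivity
  have key : 2 * (a + b) ≤ c ^ 2 * d := by
    have expand1 : 2 * (a + b) = ∑ i, ∑ j,
        2 * ((lam i ^ t * mu j ^ (1 - t)) ^ 2 + (lam i ^ (1 - t) * mu j ^ t) ^ 2)
          * ‖(star U * V) i j‖ ^ 2 := by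
      rw [hadef, hbdef, ← Finset.sum_add_distrib, Finset.mul_sum]
      refine Finset.sum_congr rfl fun i _ => ?_
      rw [← Finset.sum_add_distrib, Finset.mul_sum]
      exact Finset.sum_congr rfl fun j _ => by ring
    have expand2 : c ^ 2 * d = ∑ i, ∑ j,
        c ^ 2 * (lam i + mu j) ^ 2 * ‖(star U * V) i j‖ ^ 2 := by
      rw [hddef, Finset.mul_sum]
      refine Finset.sum_congr rfl fun i _ => ?_
      rw [Finset.mul_sum]
      exact Finset.sum_congr rfl fun j _ => by ring
    rw [expand1, expand2]
    refine Finset.sum_le_sum fun i _ => Finset.sum_le_sum fun j _ => ?_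
    exact mul_le_mul_of_nonneg_right
      (scalar_ineq t (lam i) (mu j) ht0 ht1 (hlam0 i) (hmu0 j)) (sq_nonneg _)
  -- final assembly
  have hfS : frobeniusNorm' (matRpow A t * matRpow B (1 - t)) = Real.sqrt a := by
    rw [frobeniusNorm', hF2S]
  have hfT : frobeniusNorm' (matRpow B t * matRpow A (1 - t)) = Real.sqrt b := by
    rw [frobeniusNorm', hF2T]
  have hfAB : frobeniusNorm' (A + B) = Real.sqrt d := by
    rw [frobeniusNorm', hF2AB]
  clear_value a b d c
  calc frobeniusNorm' (matRpow A t * matRpow B (1 - t) + matRpow B t * matRpow A (1 - t))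
      ≤ frobeniusNorm' (matRpow A t * matRpow B (1 - t))
        + frobeniusNorm' (matRpow B t * matRpow A (1 - t)) := frob_triangle _ _
    _ = Real.sqrt a + Real.sqrt b := by rw [hfS, hfT]
    _ ≤ Real.sqrt (2 * (a + b)) := by
        have hsq : (Real.sqrt a + Real.sqrt b) ^ 2 ≤ 2 * (a + b) := by
          nlinarith [Real.sq_sqrt ha0, Real.sq_sqrt hb0, sq_nonneg (Real.sqrt a - Real.sqrt b),
            Real.sqrt_nonneg a, Real.sqrt_nonneg b]
        calc Real.sqrt a + Real.sqrt b
            = Real.sqrt ((Real.sqrt a + Real.sqrt b) ^ 2) := by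
              rw [Real.sqrt_sq (by positivity)]
          _ ≤ Real.sqrt (2 * (a + b)) := Real.sqrt_le_sqrt hsq
    _ ≤ Real.sqrt (c ^ 2 * d) := Real.sqrt_le_sqrt key
    _ = c * Real.sqrt d := by
        rw [Real.sqrt_mul (sq_nonneg c), Real.sqrt_sq hc0]
    _ = c * frobeniusNorm' (A + B) := by rw [hfAB]
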